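/- If Z = (s₁,s₂,r,h) ∈ H²×H² with |s₁| ≤ 1/2, |s₂| ≤ 1/2, ε₀^{−2} ≤ r ≤ ε₀² and h ≥ 1, then Z ∈ F. Moreover, if all four inequalities are strict then Z lies in the interior of F. -/

import Mathlib

noncomputable section

open scoped Classical
open MeasureTheory

namespace Hilbert

/-- `k₀ = 2` if `k ≡ 1 (mod 4)` and `k₀ = 1` otherwise. -/
def k0 (k : ℕ) : ℝ := if k % 4 = 1 then 2 else 1

/-- `ω = (1 + √k)/k₀`. -/
def omg (k : ℕ) : ℝ := (1 + Real.sqrt k) / k0 k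

/-- `ω' = (1 - √k)/k₀`, the algebraic conjugate of `ω`. -/
def omg' (k : ℕ) : ℝ := (1 - Real.sqrt k) / k0 k

/-- The ring `R = ℤ[ω]`, realized inside `ℝ × ℝ` via the pair of real embeddings
`α ↦ (α, α')` of `K = ℚ(√k)`. -/
def R (k : ℕ) : Subring (ℝ × ℝ) := Subring.closure {(omg k, omg' k)}

/-- The ambient space `ℝ⁴`, with coordinates `(x₁, x₂, y₁, y₂)`. -/
abbrev Pt : Type := ℝ × ℝ × ℝ × ℝ

def x1 (p : Pt) : ℝ := p.1
def x2 (p : Pt) : ℝ := p.2.1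
def y1 (p : Pt) : ℝ := p.2.2.1
def y2 (p : Pt) : ℝ := p.2.2.2

/-- `H² × H²`, identified with an open subset of `ℝ⁴`. -/
def HH : Set Pt := {p | 0 < y1 p ∧ 0 < y2 p}

/-- The coordinate `s₁`, determined by `x₁ = s₁ + s₂ ω`, `x₂ = s₁ + s₂ ω'`. -/
def s1 (k : ℕ) (p : Pt) : ℝ := (omg' k * x1 p - omg k * x2 p) / (omg' k - omg k)

/-- The coordinate `s₂`. -/
def s2 (k : ℕ) (p : Pt) : ℝ := (x1 p - x2 p) / (omg k - omg' k)

/-- The ratio `r = y₁/y₂`. -/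
def rr (p : Pt) : ℝ := y1 p / y2 p

/-- The height `h = y₁ y₂`. -/
def hh (p : Pt) : ℝ := y1 p * y2 p

/-- `‖cZ+d‖ = ((cx₁+d)² + c²y₁²)((c'x₂+d')² + c'²y₂²)`, where `c = (c, c')`, `d = (d, d')`
are given by their two real embeddings. -/
def HNorm (c d : ℝ × ℝ) (p : Pt) : ℝ :=
  ((c.1 * x1 p + d.1) ^ 2 + c.1 ^ 2 * y1 p ^ 2) *
    ((c.2 * x2 p + d.2) ^ 2 + c.2 ^ 2 * y2 p ^ 2)

/-- `S = {(c,d) ∈ R² : cR + dR = R}`. -/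
def Spairs (k : ℕ) : Set (R k × R k) := {cd | Ideal.span {cd.1, cd.2} = ⊤}

/-- `V_{c,d}^≥ = {Z ∈ H²×H² : ‖cZ+d‖ ≥ 1}`. -/
def Vge (k : ℕ) (cd : R k × R k) : Set Pt :=
  {p ∈ HH | 1 ≤ HNorm (cd.1 : ℝ × ℝ) (cd.2 : ℝ × ℝ) p}

/-- `V_{c,d}^≤ = {Z ∈ H²×H² : ‖cZ+d‖ ≤ 1}`. -/
def Vle (k : ℕ) (cd : R k × R k) : Set Pt :=
  {p ∈ HH | HNorm (cd.1 : ℝ × ℝ) (cd.2 : ℝ × ℝ) p ≤ 1}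

/-- `V_{c,d} = {Z ∈ H²×H² : ‖cZ+d‖ = 1}`. -/
def Veq (k : ℕ) (cd : R k × R k) : Set Pt :=
  {p ∈ HH | HNorm (cd.1 : ℝ × ℝ) (cd.2 : ℝ × ℝ) p = 1}

/-- `F₀ = {Z ∈ H²×H² : ‖cZ+d‖ ≥ 1 for all (c,d) ∈ S}`. -/
def F0 (k : ℕ) : Set Pt :=
  {p ∈ HH | ∀ cd ∈ Spairs k, 1 ≤ HNorm (cd.1 : ℝ × ℝ) (cd.2 : ℝ × ℝ) p}

/-- `F_∞ = {(s₁,s₂,r,h) : |s₁| ≤ 1/2, |s₂| ≤ 1/2, ε₀⁻² ≤ r ≤ ε₀²}`, where `ε` stands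
for the fundamental unit `ε₀`. -/
def FInf (k : ℕ) (ε : ℝ) : Set Pt :=
  {p ∈ HH | |s1 k p| ≤ 1 / 2 ∧ |s2 k p| ≤ 1 / 2 ∧ (ε ^ 2)⁻¹ ≤ rr p ∧ rr p ≤ ε ^ 2}

/-- `F = F_∞ ∩ F₀`. -/
def F (k : ℕ) (ε : ℝ) : Set Pt := FInf k ε ∩ F0 k

/-- `SL₂(R)`. -/
abbrev SL (k : ℕ) := Matrix.SpecialLinearGroup (Fin 2) (R k)

/-- Möbius action on the upper half-plane: image of `x + y i` under `(a b; c d)`. -/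
def moeb (a b c d x y : ℝ) : ℝ × ℝ :=
  (((a * x + b) * (c * x + d) + a * c * y ^ 2) / ((c * x + d) ^ 2 + c ^ 2 * y ^ 2),
    y / ((c * x + d) ^ 2 + c ^ 2 * y ^ 2))

/-- The action of `γ ∈ SL₂(R)` on `H²×H²`: `γ` acts on the first factor through the first
embedding and through the conjugate matrix `γ'` (second embedding) on the second factor.
This descends to the Hilbert modular group `PSL₂(R)`. -/
def act (k : ℕ) (g : SL k) (p : Pt) : Pt :=
  ((moeb (g.1 0 0 : ℝ × ℝ).1 (g.1 0 1 : ℝ × ℝ).1 (g.1 1 0 : ℝ × ℝ).1 (g.1 1 1 : ℝ × ℝ).1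
      (x1 p) (y1 p)).1,
   (moeb (g.1 0 0 : ℝ × ℝ).2 (g.1 0 1 : ℝ × ℝ).2 (g.1 1 0 : ℝ × ℝ).2 (g.1 1 1 : ℝ × ℝ).2
      (x2 p) (y2 p)).1,
   (moeb (g.1 0 0 : ℝ × ℝ).1 (g.1 0 1 : ℝ × ℝ).1 (g.1 1 0 : ℝ × ℝ).1 (g.1 1 1 : ℝ × ℝ).1
      (x1 p) (y1 p)).2,
   (moeb (g.1 0 0 : ℝ × ℝ).2 (g.1 0 1 : ℝ × ℝ).2 (g.1 1 0 : ℝ × ℝ).2 (g.1 1 1 : ℝ × ℝ).2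
      (x2 p) (y2 p)).2)

/-- The pair of real embeddings of a unit of `R`. -/
def unitVal (k : ℕ) (u : (R k)ˣ) : ℝ × ℝ := ((u : R k) : ℝ × ℝ)

/-- `e` is the fundamental unit of `R`: the smallest unit of `R` greater than `1`
(with respect to the first embedding). -/
def IsFundUnit (k : ℕ) (e : (R k)ˣ) : Prop :=
  1 < (unitVal k e).1 ∧
    ∀ v : (R k)ˣ, 1 < (unitVal k v).1 → (unitVal k e).1 ≤ (unitVal k v).1

/-- The real number `ε₀ > 1`, the fundamental unit under the first embedding. -/
def eps (k : ℕ) (e : (R k)ˣ) : ℝ := (unitVal k e).1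


/-- The norm `N(c) = c c'` of an element of `R` (as a real number). -/
def Nm (k : ℕ) (c : R k) : ℝ := ((c : ℝ × ℝ)).1 * ((c : ℝ × ℝ)).2

/-- A subset `C` of `H²×H²` is hyperbolically bounded if it is bounded in the
Euclidean metric and `y₁, y₂ > ε` on `C` for some `ε > 0`. -/
def HypBounded (C : Set Pt) : Prop :=
  C ⊆ HH ∧ Bornology.IsBounded C ∧ ∃ ε > (0 : ℝ), ∀ p ∈ C, ε < y1 p ∧ ε < y2 p

/-- `V_{C,μ} = {(c,d) ∈ R × R : ‖cZ+d‖ ≤ μ for some Z ∈ C}`. -/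
def VCmu (k : ℕ) (C : Set Pt) (μ : ℝ) : Set (R k × R k) :=
  {cd | ∃ p ∈ C, HNorm (cd.1 : ℝ × ℝ) (cd.2 : ℝ × ℝ) p ≤ μ}

/-- The conditions (8) of Theorem `FiniteSides` on a pair `(c,d) ∈ R²`. -/
def SCond (k : ℕ) (ε : ℝ) (cd : R k × R k) : Prop :=
  cd.1 ≠ 0 ∧ Ideal.span {cd.1, cd.2} = ⊤ ∧
    |Nm k cd.1| ≤ 2 * k / (k0 k) ^ 2 ∧
    |((cd.2 : ℝ × ℝ)).1 / ((cd.1 : ℝ × ℝ)).1| <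
      ε * Real.sqrt (2 * k / (Nm k cd.1 ^ 2 * (k0 k) ^ 2) - (k0 k) ^ 2 / (2 * k)) +
        (1 + omg k) / 2 ∧
    |((cd.2 : ℝ × ℝ)).2 / ((cd.1 : ℝ × ℝ)).2| <
      ε * Real.sqrt (2 * k / (Nm k cd.1 ^ 2 * (k0 k) ^ 2) - (k0 k) ^ 2 / (2 * k)) +
        (1 - omg' k) / 2

/-- `S₁` is a set of representatives, up to multiplication by units of `R`, of the pairs
`(c,d) ∈ R²` satisfying the conditions `SCond`. -/
def IsRepSet (k : ℕ) (ε : ℝ) (S1 : Set (R k × R k)) : Prop :=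
  (∀ cd ∈ S1, SCond k ε cd) ∧
    (∀ cd : R k × R k, SCond k ε cd →
      ∃ ab ∈ S1, ∃ u : (R k)ˣ, cd.1 = (u : R k) * ab.1 ∧ cd.2 = (u : R k) * ab.2) ∧
    (∀ ab ∈ S1, ∀ ab' ∈ S1,
      (∃ u : (R k)ˣ, ab'.1 = (u : R k) * ab.1 ∧ ab'.2 = (u : R k) * ab.2) → ab = ab')

/-- The family `𝒱_∞ = {V_i^± : i = 1,2,3}`. -/
def VfamInf (k : ℕ) (ε : ℝ) : Set (Set Pt) :=
  { {p ∈ HH | s1 k p = 1 / 2}, {p ∈ HH | s1 k p = -(1 / 2)},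
    {p ∈ HH | s2 k p = 1 / 2}, {p ∈ HH | s2 k p = -(1 / 2)},
    {p ∈ HH | rr p = ε ^ 2}, {p ∈ HH | rr p = (ε ^ 2)⁻¹} }

/-- The family `𝒱 = {V_{c,d} : (c,d) ∈ S, c ≠ 0}`. -/
def Vfam (k : ℕ) : Set (Set Pt) :=
  {V | ∃ cd ∈ Spairs k, cd.1 ≠ 0 ∧ V = Veq k cd}

/-- The family `𝓜 = {γ(M) : γ ∈ Γ, M ∈ 𝒱 ∪ 𝒱_∞}`. -/
def Mfam (k : ℕ) (ε : ℝ) : Set (Set Pt) :=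
  {M | ∃ g : SL k, ∃ V ∈ Vfam k ∪ VfamInf k ε, M = act k g '' V}

/-- `ω` as an element of `R`. -/
def omR (k : ℕ) : R k := ⟨(omg k, omg' k), Subring.subset_closure rfl⟩

/-- The side-pairing transformations: `γ ≠ 1` (in `PSL₂(R)`) such that `F ∩ γ⁻¹(F)` has
Hausdorff dimension `3`. -/
def SidePairings (k : ℕ) (ε : ℝ) : Set (SL k) :=
  {g | g ≠ 1 ∧ g.1 ≠ -1 ∧ dimH (F k ε ∩ act k g⁻¹ '' F k ε) = 3}


/-! ### Auxiliary lemmas -/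

/-- The trace of `ω` as an integer. -/
def tZ (k : ℕ) : ℤ := if k % 4 = 1 then 1 else 2

/-- The norm of `ω` as an integer. -/
def nZ (k : ℕ) : ℤ := if k % 4 = 1 then (1 - (k : ℤ)) / 4 else 1 - (k : ℤ)

lemma k0_ne_zero (k : ℕ) : k0 k ≠ 0 := by
  unfold k0; split <;> norm_num

lemma sqrt_mul_self' (k : ℕ) : Real.sqrt k * Real.sqrt k = k :=
  Real.mul_self_sqrt (Nat.cast_nonneg k)

lemma trace_eq (k : ℕ) : omg k + omg' k = (tZ k : ℝ) := by
  unfold omg omg' k0 tZ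
  split <;> push_cast <;> ring

lemma norm_eq (k : ℕ) : omg k * omg' k = (nZ k : ℝ) := by
  unfold omg omg' k0 nZ
  split_ifs with h
  · have h4 : (4 : ℤ) ∣ 1 - (k : ℤ) := by omega
    obtain ⟨m, hm⟩ := h4
    rw [hm, Int.mul_ediv_cancel_left _ (by norm_num)]
    have hm' : (1 : ℝ) - (k : ℝ) = 4 * (m : ℝ) := by exact_mod_cast congrArg (Int.cast : ℤ → ℝ) hm
    nlinarith [sqrt_mul_self' k, hm']
  · push_cast
    nlinarith [sqrt_mul_self' k]

lemma omg_sq (k : ℕ) : omg k ^ 2 = (tZ k : ℝ) * omg k - (nZ k : ℝ) := by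
  linear_combination omg k * trace_eq k - norm_eq k

lemma omg'_sq (k : ℕ) : omg' k ^ 2 = (tZ k : ℝ) * omg' k - (nZ k : ℝ) := by
  linear_combination omg' k * trace_eq k - norm_eq k

/-- Every element of `R` has the form `a + bω` (in both embeddings). -/
lemma mem_R_repr (k : ℕ) (z : R k) :
    ∃ a b : ℤ, (z : ℝ × ℝ) = ((a : ℝ) + b * omg k, (a : ℝ) + b * omg' k) := by
  obtain ⟨z, hz⟩ := z
  refine Subring.closure_induction (p := fun w _ =>
    ∃ a b : ℤ, w = ((a : ℝ) + b * omg k, (a : ℝ) + b * omg' k)) ?_ ?_ ?_ ?_ ?_ ?_ hz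
  · rintro x rfl
    exact ⟨0, 1, by simp⟩
  · exact ⟨0, 0, by simp [Prod.ext_iff]⟩
  · exact ⟨1, 0, by simp [Prod.ext_iff]⟩
  · rintro x y _ _ ⟨a, b, rfl⟩ ⟨c, d, rfl⟩
    exact ⟨a + c, b + d, by simp [Prod.ext_iff]; constructor <;> push_cast <;> ring⟩
  · rintro x _ ⟨a, b, rfl⟩
    exact ⟨-a, -b, by simp [Prod.ext_iff]; constructor <;> push_cast <;> ring⟩
  · rintro x y _ _ ⟨a, b, rfl⟩ ⟨c, d, rfl⟩
    refine ⟨a * c - b * d * nZ k, a * d + b * c + b * d * tZ k, ?_⟩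
    simp only [Prod.mk_mul_mk, Prod.ext_iff]
    constructor
    · push_cast
      linear_combination ((b : ℝ) * (d : ℝ)) * omg_sq k
    · push_cast
      linear_combination ((b : ℝ) * (d : ℝ)) * omg'_sq k

lemma irr_sqrt (k : ℕ) (hk : Squarefree k) (hk1 : 1 < k) : Irrational (Real.sqrt k) := by
  rw [irrational_sqrt_natCast_iff]
  rintro ⟨m, hm⟩
  have hu : IsUnit m := hk m (by rw [hm])
  rw [Nat.isUnit_iff] at hu
  rw [hu] at hm
  omega

lemma lin_omg_ne (k : ℕ) (hk : Squarefree k) (hk1 : 1 < k) (a b : ℤ) (hb : b ≠ 0) :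
    (a : ℝ) + b * omg k ≠ 0 := by
  intro h
  have hb' : (b : ℝ) ≠ 0 := Int.cast_ne_zero.mpr hb
  have hirr := irr_sqrt k hk hk1
  unfold omg k0 at h
  by_cases h4 : k % 4 = 1 <;> simp only [h4, if_true, if_false] at h
  · refine hirr ⟨-2 * (a : ℚ) / (b : ℚ) - 1, ?_⟩
    push_cast
    field_simp at h ⊢
    linarith
  · refine hirr ⟨-(a : ℚ) / (b : ℚ) - 1, ?_⟩
    push_cast
    field_simp at h ⊢
    linarith

lemma lin_omg'_ne (k : ℕ) (hk : Squarefree k) (hk1 : 1 < k) (a b : ℤ) (hb : b ≠ 0) :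
    (a : ℝ) + b * omg' k ≠ 0 := by
  intro h
  have hb' : (b : ℝ) ≠ 0 := Int.cast_ne_zero.mpr hb
  have hirr := irr_sqrt k hk hk1
  unfold omg' k0 at h
  by_cases h4 : k % 4 = 1 <;> simp only [h4, if_true, if_false] at h
  · refine hirr ⟨2 * (a : ℚ) / (b : ℚ) + 1, ?_⟩
    push_cast
    field_simp at h ⊢
    linarith
  · refine hirr ⟨(a : ℚ) / (b : ℚ) + 1, ?_⟩
    push_cast
    field_simp at h ⊢
    linarith

lemma coord_ne_zero (k : ℕ) (hk : Squarefree k) (hk1 : 1 < k) (z : R k) (hz : z ≠ 0) :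
    ((z : ℝ × ℝ)).1 ≠ 0 ∧ ((z : ℝ × ℝ)).2 ≠ 0 := by
  obtain ⟨a, b, hab⟩ := mem_R_repr k z
  have hz' : ((z : ℝ × ℝ)) ≠ 0 := by
    intro h
    exact hz (Subtype.ext h)
  rcases eq_or_ne b 0 with rfl | hb
  · have ha : a ≠ 0 := by
      rintro rfl
      apply hz'
      rw [hab]; simp [Prod.ext_iff]
    rw [hab]
    constructor <;> simp <;> exact Int.cast_ne_zero.mpr ha
  · rw [hab]
    exact ⟨lin_omg_ne k hk hk1 a b hb, lin_omg'_ne k hk hk1 a b hb⟩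

/-- The norm of an element of `R` is an integer. -/
lemma norm_int (k : ℕ) (z : R k) :
    ∃ m : ℤ, ((z : ℝ × ℝ)).1 * ((z : ℝ × ℝ)).2 = (m : ℝ) := by
  obtain ⟨a, b, hab⟩ := mem_R_repr k z
  refine ⟨a ^ 2 + a * b * tZ k + b ^ 2 * nZ k, ?_⟩
  rw [hab]
  push_cast
  linear_combination ((a : ℝ) * (b : ℝ)) * trace_eq k + ((b : ℝ) ^ 2) * norm_eq k

/-- Main geometric lemma: if `h ≥ 1` then `p ∈ F₀`. -/
lemma mem_F0_of_height (k : ℕ) (hk : Squarefree k) (hk1 : 1 < k) (p : Pt) (hp : p ∈ HH)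
    (hhp : 1 ≤ hh p) : p ∈ F0 k := by
  obtain ⟨hy1, hy2⟩ := hp
  refine ⟨⟨hy1, hy2⟩, ?_⟩
  rintro ⟨c, d⟩ hcd
  have h1 : (1 : R k) ∈ Ideal.span ({c, d} : Set (R k)) := by rw [hcd]; trivial
  rw [Ideal.mem_span_pair] at h1
  obtain ⟨u, v, huv⟩ := h1
  simp only [hh] at hhp
  rcases eq_or_ne c 0 with rfl | hc
  · -- c = 0 : then d is a unit, ‖cZ+d‖ = N(d)² = 1
    have hvd : v * d = 1 := by rw [← huv]; ring
    obtain ⟨md, hmd⟩ := norm_int k d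
    obtain ⟨mv, hmv⟩ := norm_int k v
    have hco : ((v : ℝ × ℝ)).1 * ((d : ℝ × ℝ)).1 = 1 ∧
        ((v : ℝ × ℝ)).2 * ((d : ℝ × ℝ)).2 = 1 := by
      have h1 : ((v * d : R k) : ℝ × ℝ) = (1 : ℝ × ℝ) := by rw [hvd]; rfl
      rw [Subring.coe_mul] at h1
      exact ⟨congrArg Prod.fst h1, congrArg Prod.snd h1⟩
    have hprod : (mv : ℝ) * (md : ℝ) = 1 := by
      rw [← hmv, ← hmd]
      nlinarith [hco.1, hco.2]
    have hint : mv * md = 1 := by exact_mod_cast hprod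
    have hmd1 : md = 1 ∨ md = -1 := by
      have : IsUnit md := IsUnit.of_mul_eq_one (b := mv) (by rw [mul_comm]; exact hint)
      exact Int.isUnit_iff.mp this
    have hmd2 : ((md : ℝ)) ^ 2 = 1 := by
      rcases hmd1 with h | h <;> rw [h] <;> norm_num
    show 1 ≤ HNorm (((0 : R k) : ℝ × ℝ)) ((d : ℝ × ℝ)) p
    have hz : (((0 : R k) : ℝ × ℝ)) = (0 : ℝ × ℝ) := rfl
    rw [hz]
    unfold HNorm
    have hsq : (((d : ℝ × ℝ)).1 * ((d : ℝ × ℝ)).2) ^ 2 = 1 := by rw [hmd]; exact hmd2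
    simp only [Prod.fst_zero, Prod.snd_zero]
    nlinarith [hsq]
  · -- c ≠ 0 : then ‖cZ+d‖ ≥ N(c)² h² ≥ 1
    obtain ⟨m, hm⟩ := norm_int k c
    obtain ⟨hc1, hc2⟩ := coord_ne_zero k hk hk1 c hc
    have hm0 : m ≠ 0 := by
      rintro rfl
      exact mul_ne_zero hc1 hc2 (by rw [hm]; simp)
    have hm2 : (1 : ℝ) ≤ (m : ℝ) ^ 2 := by
      have h1 : (1 : ℤ) ≤ m ^ 2 := by rcases lt_or_gt_of_ne hm0 with h | h <;> nlinarith
      exact_mod_cast h1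
    show 1 ≤ HNorm ((c : ℝ × ℝ)) ((d : ℝ × ℝ)) p
    unfold HNorm
    set c1 := ((c : ℝ × ℝ)).1
    set c2 := ((c : ℝ × ℝ)).2
    set d1 := ((d : ℝ × ℝ)).1
    set d2 := ((d : ℝ × ℝ)).2
    have key : (c1 ^ 2 * y1 p ^ 2) * (c2 ^ 2 * y2 p ^ 2) = (m : ℝ) ^ 2 * (y1 p * y2 p) ^ 2 := by
      rw [← hm]; ring
    have k2 : (1 : ℝ) ≤ (m : ℝ) ^ 2 * (y1 p * y2 p) ^ 2 := by
      nlinarith [hm2, hhp, mul_pos hy1 hy2]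
    nlinarith [k2, key, sq_nonneg (c1 * x1 p + d1), sq_nonneg (c2 * x2 p + d2),
      sq_nonneg (c1 * y1 p), sq_nonneg (c2 * y2 p),
      mul_nonneg (sq_nonneg (c1 * x1 p + d1)) (sq_nonneg (c2 * x2 p + d2)),
      mul_nonneg (sq_nonneg (c1 * x1 p + d1)) (sq_nonneg (c2 * y2 p)),
      mul_nonneg (sq_nonneg (c1 * y1 p)) (sq_nonneg (c2 * x2 p + d2))]

/-- The weak form: membership in `F`. -/
lemma mem_F_aux (k : ℕ) (hk : Squarefree k) (hk1 : 1 < k) (ε : ℝ) (p : Pt) (hp : p ∈ HH)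
    (hs1 : |s1 k p| ≤ 1 / 2) (hs2 : |s2 k p| ≤ 1 / 2)
    (hr1 : (ε ^ 2)⁻¹ ≤ rr p) (hr2 : rr p ≤ ε ^ 2) (hhp : 1 ≤ hh p) :
    p ∈ F k ε :=
  ⟨⟨hp, hs1, hs2, hr1, hr2⟩, mem_F0_of_height k hk hk1 p hp hhp⟩

lemma continuous_y1 : Continuous y1 := by
  unfold y1; fun_prop

lemma continuous_y2 : Continuous y2 := by
  unfold y2; fun_prop

lemma continuous_s1 (k : ℕ) : Continuous (s1 k) := by
  unfold s1 x1 x2; fun_prop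

lemma continuous_s2 (k : ℕ) : Continuous (s2 k) := by
  unfold s2 x1 x2; fun_prop

lemma continuous_hh : Continuous hh := by
  unfold hh y1 y2; fun_prop

/-- If `Z = (s₁,s₂,r,h) ∈ H²×H²` with `|s₁| ≤ 1/2`, `|s₂| ≤ 1/2`,
`ε₀⁻² ≤ r ≤ ε₀²` and `h ≥ 1`, then `Z ∈ F`; moreover if all four inequalities are strict
then `Z` lies in the interior of `F`. -/
theorem mem_F_of_secureHeight (k : ℕ) (hk : Squarefree k) (hk1 : 1 < k)
    (e : (R k)ˣ) (he : IsFundUnit k e) (p : Pt) (hp : p ∈ HH) :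
    (|s1 k p| ≤ 1 / 2 → |s2 k p| ≤ 1 / 2 →
      (eps k e ^ 2)⁻¹ ≤ rr p → rr p ≤ eps k e ^ 2 → 1 ≤ hh p →
        p ∈ F k (eps k e)) ∧
    (|s1 k p| < 1 / 2 → |s2 k p| < 1 / 2 →
      (eps k e ^ 2)⁻¹ < rr p → rr p < eps k e ^ 2 → 1 < hh p →
        p ∈ interior (F k (eps k e))) := by
  set ε := eps k e with hε
  constructor
  · intro hs1 hs2 hr1 hr2 hhp
    exact mem_F_aux k hk hk1 ε p hp hs1 hs2 hr1 hr2 hhp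
  · intro hs1 hs2 hr1 hr2 hhp
    obtain ⟨hy1, hy2⟩ := hp
    set U : Set Pt := {q | (0 < y1 q ∧ 0 < y2 q) ∧ |s1 k q| < 1 / 2 ∧ |s2 k q| < 1 / 2 ∧
      (ε ^ 2)⁻¹ * y2 q < y1 q ∧ y1 q < ε ^ 2 * y2 q ∧ 1 < hh q} with hU
    have hUopen : IsOpen U := by
      refine IsOpen.and (IsOpen.and ?_ ?_) (IsOpen.and ?_ (IsOpen.and ?_
        (IsOpen.and ?_ (IsOpen.and ?_ ?_))))
      · exact isOpen_lt continuous_const continuous_y1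
      · exact isOpen_lt continuous_const continuous_y2
      · exact isOpen_lt (continuous_s1 k).abs continuous_const
      · exact isOpen_lt (continuous_s2 k).abs continuous_const
      · exact isOpen_lt (continuous_const.mul continuous_y2) continuous_y1
      · exact isOpen_lt continuous_y1 (continuous_const.mul continuous_y2)
      · exact isOpen_lt continuous_const continuous_hh
    have hUF : U ⊆ F k ε := by
      rintro q ⟨⟨hqy1, hqy2⟩, hq1, hq2, hq3, hq4, hq5⟩
      refine mem_F_aux k hk hk1 ε q ⟨hqy1, hqy2⟩ hq1.le hq2.le ?_ ?_ hq5.le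
      · rw [show rr q = y1 q / y2 q from rfl, le_div_iff₀ hqy2]
        exact hq3.le
      · rw [show rr q = y1 q / y2 q from rfl, div_le_iff₀ hqy2]
        exact hq4.le
    have hpU : p ∈ U := by
      refine ⟨⟨hy1, hy2⟩, hs1, hs2, ?_, ?_, hhp⟩
      · rw [show rr p = y1 p / y2 p from rfl, lt_div_iff₀ hy2] at hr1
        exact hr1
      · rw [show rr p = y1 p / y2 p from rfl, div_lt_iff₀ hy2] at hr2
        exact hr2
    exact mem_interior.mpr ⟨U, hUF, hUopen, hpU⟩

end Hilbert
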